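/- Let a_1,…,a_m ∈ ℝ^{d_x} be unit vectors, fix 1 ≤ i ≤ m, and let a_i' ∈ ℝ^{d_x} be a unit vector with ‖a_i − a_i'‖_2 = d. Let A be the d_x × m matrix with columns a_1,…,a_m and A' the matrix obtained from A by replacing the i-th column with a_i'. Assume that every two distinct columns of A are at distance at least ρ/2 and every two distinct columns of A' are at distance at least ρ/2, where ρ > 0. Then there exist W^1, W^2 ∈ ℝ^{d_x×d_x} and b ∈ ℝ^{d_x} such that W^2·ReLU(W^1 A + b·𝟙^T) + A = A' (ReLU applied entrywise, b·𝟙^T the matrix whose every column is b) and ‖W^1‖_F = ‖W^2‖_F = √(8d)/ρ. -/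

import Mathlib

noncomputable section

open scoped BigOperators

/-- The ReLU function `t ↦ max(t, 0)`. -/
def relu (t : ℝ) : ℝ := max t 0

/-- Euclidean (ℓ²) norm of a vector in `ℝ^d`. -/
def euclNorm {d : ℕ} (v : Fin d → ℝ) : ℝ := Real.sqrt (∑ i, v i ^ 2)

/-- Frobenius norm of a matrix in `ℝ^{d×d}`. -/
def frob {d : ℕ} (M : Fin d → Fin d → ℝ) : ℝ := Real.sqrt (∑ i, ∑ j, M i j ^ 2)

/-- One residual unit `x ↦ W² · ReLU(W¹ x + b) + x` (ReLU applied entrywise). -/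
def resUnitReLU {d : ℕ} (W1 W2 : Fin d → Fin d → ℝ) (b : Fin d → ℝ)
    (x : Fin d → ℝ) : Fin d → ℝ :=
  fun i => (∑ j, W2 i j * relu ((∑ k, W1 j k * x k) + b j)) + x i

/-- The residual network `N = f_R ∘ ⋯ ∘ f_1` where `f_r(x) = W^{r,2}·ReLU(W^{r,1}x + b_r) + x`. -/
def reluNet {d : ℕ} (W1 W2 : ℕ → Fin d → Fin d → ℝ) (b : ℕ → Fin d → ℝ) :
    ℕ → (Fin d → ℝ) → (Fin d → ℝ)
  | 0, x => x
  | r + 1, x => resUnitReLU (W1 r) (W2 r) (b r) (reluNet W1 W2 b r x)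

lemma enorm_sq_eq {n : ℕ} {v : Fin n → ℝ} {c : ℝ} (h : euclNorm v = c) :
    ∑ k, v k ^ 2 = c ^ 2 := by
  rw [← h, euclNorm, Real.sq_sqrt (by positivity)]

/-- Lemma 1. Given unit columns `a_1,…,a_m`, an index `i`, and a unit vector
`a_i'` with `‖a_i − a_i'‖₂ = d`, such that both the original columns and the columns after
replacing `a_i` by `a_i'` are pairwise at distance at least `ρ/2` (`ρ > 0`), there exist
`W¹, W²` and a bias `b` with `W²·ReLU(W¹A + b𝟙ᵀ) + A = A'` (i.e. the residual unit sends each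
column of `A` to the corresponding column of `A'`) and `‖W¹‖_F = ‖W²‖_F = √(8d)/ρ`. -/
theorem residual_unit_moves_one_column
    {dx m : ℕ} (a : Fin m → Fin dx → ℝ) (i : Fin m) (a' : Fin dx → ℝ)
    (ha : ∀ p, euclNorm (a p) = 1) (ha' : euclNorm a' = 1)
    (ρ d : ℝ) (hρ : 0 < ρ)
    (hd : euclNorm (a i - a') = d)
    (hA : ∀ p q : Fin m, p ≠ q → ρ / 2 ≤ euclNorm (a p - a q))
    (hA' : ∀ p q : Fin m, p ≠ q →
      ρ / 2 ≤ euclNorm (Function.update a i a' p - Function.update a i a' q)) :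
    ∃ (W1 W2 : Fin dx → Fin dx → ℝ) (b : Fin dx → ℝ),
      (∀ p, resUnitReLU W1 W2 b (a p) = Function.update a i a' p) ∧
      frob W1 = Real.sqrt (8 * d) / ρ ∧ frob W2 = Real.sqrt (8 * d) / ρ := by
  have hd0 : 0 ≤ d := hd ▸ Real.sqrt_nonneg _
  rcases eq_or_lt_of_le hd0 with hdz | hdpos
  · -- d = 0 : a' = a i, take everything zero
    have hsum : ∑ k, (a i - a') k ^ 2 = 0 := by
      have := enorm_sq_eq hd
      rw [this, ← hdz]; ring
    have haa : a' = a i := by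
      funext k
      have hk : (a i - a') k ^ 2 = 0 := by
        have hnn : ∀ k ∈ Finset.univ, (0:ℝ) ≤ (a i - a') k ^ 2 := fun k _ => sq_nonneg _
        exact (Finset.sum_eq_zero_iff_of_nonneg hnn).mp hsum k (Finset.mem_univ k)
      have : a i k - a' k = 0 := by
        have := pow_eq_zero_iff (n := 2) (by norm_num) |>.mp hk
        simpa using this
      linarith
    refine ⟨0, 0, 0, ?_, ?_, ?_⟩
    · intro p
      funext j
      have : Function.update a i a' p = a p := by
        rw [haa, Function.update_eq_self]
      rw [this]
      simp [resUnitReLU]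
    · simp [frob, ← hdz]
    · simp [frob, ← hdz]
  · -- d > 0
    have hdx : 0 < dx := by
      rcases Nat.eq_zero_or_pos dx with h0 | h; swap
      · exact h
      · exfalso
        have := ha i
        subst h0
        simp [euclNorm] at this
    set u : Fin dx → ℝ := a i with hu
    set α : ℝ := Real.sqrt (8 * d) / ρ with hα
    have h8d : (0:ℝ) < 8 * d := by linarith
    have hαpos : 0 < α := div_pos (Real.sqrt_pos.mpr h8d) hρ
    have hαsq : α ^ 2 = 8 * d / ρ ^ 2 := by
      rw [hα, div_pow, Real.sq_sqrt (le_of_lt h8d)]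
    set θ : ℝ := 1 - ρ ^ 2 / 8 with hθ
    set β : ℝ := 8 / (α * ρ ^ 2) with hβ
    have hβpos : 0 < β := by positivity
    let j₀ : Fin dx := ⟨0, hdx⟩
    set W1 : Fin dx → Fin dx → ℝ := fun j k => if j = j₀ then α * u k else 0 with hW1
    set W2 : Fin dx → Fin dx → ℝ := fun j k => if k = j₀ then (a' j - u j) * β else 0 with hW2
    set b : Fin dx → ℝ := fun j => if j = j₀ then -(α * θ) else 0 with hb
    -- inner product formula
    have inner_le : ∀ p : Fin m, p ≠ i → ∑ k, u k * a p k ≤ θ := by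
      intro p hp
      have h1 : ∑ k, u k ^ 2 = 1 := by simpa using enorm_sq_eq (ha i)
      have h2 : ∑ k, a p k ^ 2 = 1 := by simpa using enorm_sq_eq (ha p)
      have hdist : ρ / 2 ≤ euclNorm (a i - a p) := hA i p (Ne.symm hp)
      have hS : (ρ / 2) ^ 2 ≤ ∑ k, (a i - a p) k ^ 2 := by
        rw [euclNorm] at hdist
        exact (Real.le_sqrt (by positivity) (by positivity)).mp hdist
      have hexp : ∑ k, (a i - a p) k ^ 2
          = (∑ k, u k ^ 2) - 2 * ∑ k, u k * a p k + ∑ k, a p k ^ 2 := by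
        have hk : ∀ k : Fin dx, (a i - a p) k ^ 2
            = u k ^ 2 - 2 * (u k * a p k) + a p k ^ 2 := by
          intro k
          simp only [Pi.sub_apply, hu]
          ring
        simp_rw [hk, Finset.sum_add_distrib, Finset.sum_sub_distrib, ← Finset.mul_sum]
      rw [hexp, h1, h2] at hS
      rw [hθ]
      nlinarith
    have inner_self : ∑ k, u k * a i k = 1 := by
      have h1 : ∑ k, u k ^ 2 = 1 := by simpa using enorm_sq_eq (ha i)
      rw [← h1]
      apply Finset.sum_congr rfl
      intro k _
      rw [hu]; ring
    -- the preactivation at row j₀ for column p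
    have hpre : ∀ p : Fin m, (∑ l, W1 j₀ l * a p l) + b j₀
        = α * ((∑ k, u k * a p k) - θ) := by
      intro p
      simp only [hW1, hb, if_pos rfl]
      simp_rw [mul_assoc]
      rw [← Finset.mul_sum]
      ring
    have hmain : ∀ p, resUnitReLU W1 W2 b (a p) = Function.update a i a' p := by
      intro p
      funext j
      have hsum2 : ∑ k, W2 j k * relu ((∑ l, W1 k l * a p l) + b k)
          = (a' j - u j) * β * relu ((∑ l, W1 j₀ l * a p l) + b j₀) := by
        rw [Finset.sum_eq_single j₀]
        · simp [hW2]
        · intro k _ hk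
          simp [hW2, hk]
        · simp
      by_cases hp : p = i
      · subst hp
        have : relu ((∑ l, W1 j₀ l * a p l) + b j₀) = α * (ρ ^ 2 / 8) := by
          rw [hpre, inner_self, hθ]
          have hpos : 0 < α * (1 - (1 - ρ ^ 2 / 8)) := by
            have : 1 - (1 - ρ ^ 2 / 8) = ρ ^ 2 / 8 := by ring
            rw [this]; positivity
          rw [relu, max_eq_left (le_of_lt hpos)]
          ring
        simp only [resUnitReLU, hsum2, this, Function.update_self]
        have hβα : β * (α * (ρ ^ 2 / 8)) = 1 := by
          rw [hβ]
          field_simp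
        have : (a' j - u j) * β * (α * (ρ ^ 2 / 8)) = a' j - u j := by
          rw [mul_assoc, hβα, mul_one]
        rw [this, hu]
        ring
      · have hle : (∑ l, W1 j₀ l * a p l) + b j₀ ≤ 0 := by
          rw [hpre]
          have := inner_le p hp
          nlinarith [hαpos]
        have hr : relu ((∑ l, W1 j₀ l * a p l) + b j₀) = 0 :=
          max_eq_right hle
        simp only [resUnitReLU, hsum2, hr, mul_zero, zero_add]
        rw [Function.update_of_ne hp]
    refine ⟨W1, W2, b, hmain, ?_, ?_⟩
    · -- frob W1 = α
      have : ∑ j, ∑ k, W1 j k ^ 2 = α ^ 2 := by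
        rw [Finset.sum_eq_single j₀]
        · have h1 : ∑ k, u k ^ 2 = 1 := by simpa using enorm_sq_eq (ha i)
          simp only [hW1, if_pos rfl, mul_pow]
          rw [← Finset.mul_sum, h1, mul_one]
        · intro k _ hk
          simp [hW1, hk]
        · simp
      rw [frob, this, Real.sqrt_sq (le_of_lt hαpos)]
    · -- frob W2 = α
      have hd2 : ∑ j, (a' j - u j) ^ 2 = d ^ 2 := by
        have := enorm_sq_eq hd
        rw [← this]
        apply Finset.sum_congr rfl
        intro j _
        simp only [Pi.sub_apply, hu]
        ring
      have hsum : ∑ j, ∑ k, W2 j k ^ 2 = (d * β) ^ 2 := by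
        have : ∀ j, ∑ k, W2 j k ^ 2 = (a' j - u j) ^ 2 * β ^ 2 := by
          intro j
          rw [Finset.sum_eq_single j₀]
          · simp only [hW2, if_pos rfl]; ring
          · intro k _ hk; simp [hW2, hk]
          · simp
        rw [Finset.sum_congr rfl (fun j _ => this j), ← Finset.sum_mul, hd2]
        ring
      rw [frob, hsum, Real.sqrt_sq (by positivity)]
      -- d * β = α
      have hαβ : α * β = 8 / ρ ^ 2 := by
        rw [hβ]
        field_simp
      have key : α * (d * β) = α * α := by
        calc α * (d * β) = d * (α * β) := by ring
          _ = d * (8 / ρ ^ 2) := by rw [hαβ]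
          _ = α ^ 2 := by rw [hαsq]; ring
          _ = α * α := sq α
      exact mul_left_cancel₀ (ne_of_gt hαpos) key

end
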